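/- Assume R ≻ 0. Let X, X_* ∈ ℝ^{n×n} be symmetric with 0 ⪯ X ⪯ X_* and 𝓡(X_*) = 0, and suppose A_c(X) − G_c(X) X_* is stable. If Z is a symmetric matrix satisfying [Z, −Iₙ] Ω(X) [Z; −Iₙ] = 0, then Z ⪯ X_*. -/

import Mathlib

open Matrix Filter

noncomputable section

/-- `Π₁₁(X) = Σᵢ (A₀ⁱ)ᵀ X A₀ⁱ`. -/
def Pi11 {n r : ℕ} (A0 : Fin r → Matrix (Fin n) (Fin n) ℝ)
    (X : Matrix (Fin n) (Fin n) ℝ) : Matrix (Fin n) (Fin n) ℝ :=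
  ∑ i, (A0 i)ᵀ * X * A0 i

/-- `Π₁₂(X) = Σᵢ (A₀ⁱ)ᵀ X B₀ⁱ`. -/
def Pi12 {n m r : ℕ} (A0 : Fin r → Matrix (Fin n) (Fin n) ℝ)
    (B0 : Fin r → Matrix (Fin n) (Fin m) ℝ)
    (X : Matrix (Fin n) (Fin n) ℝ) : Matrix (Fin n) (Fin m) ℝ :=
  ∑ i, (A0 i)ᵀ * X * B0 i

/-- `Π₂₂(X) = Σᵢ (B₀ⁱ)ᵀ X B₀ⁱ`. -/
def Pi22 {n m r : ℕ} (B0 : Fin r → Matrix (Fin n) (Fin m) ℝ)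
    (X : Matrix (Fin n) (Fin n) ℝ) : Matrix (Fin m) (Fin m) ℝ :=
  ∑ i, (B0 i)ᵀ * X * B0 i

/-- The block matrix `Π(X) = [Π₁₁(X), Π₁₂(X); Π₁₂(X)ᵀ, Π₂₂(X)]`. -/
def PiBlock {n m r : ℕ} (A0 : Fin r → Matrix (Fin n) (Fin n) ℝ)
    (B0 : Fin r → Matrix (Fin n) (Fin m) ℝ)
    (X : Matrix (Fin n) (Fin n) ℝ) : Matrix (Fin n ⊕ Fin m) (Fin n ⊕ Fin m) ℝ :=
  fromBlocks (Pi11 A0 X) (Pi12 A0 B0 X) (Pi12 A0 B0 X)ᵀ (Pi22 B0 X)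

/-- `L_c(X) = L + Π₁₂(X)`. -/
def Lc {n m r : ℕ} (L : Matrix (Fin n) (Fin m) ℝ)
    (A0 : Fin r → Matrix (Fin n) (Fin n) ℝ) (B0 : Fin r → Matrix (Fin n) (Fin m) ℝ)
    (X : Matrix (Fin n) (Fin n) ℝ) : Matrix (Fin n) (Fin m) ℝ :=
  L + Pi12 A0 B0 X

/-- `R_c(X) = R + Π₂₂(X)`. -/
def Rc {n m r : ℕ} (R : Matrix (Fin m) (Fin m) ℝ)
    (B0 : Fin r → Matrix (Fin n) (Fin m) ℝ)
    (X : Matrix (Fin n) (Fin n) ℝ) : Matrix (Fin m) (Fin m) ℝ :=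
  R + Pi22 B0 X

/-- `Q_c(X) = Q + Π₁₁(X)`. -/
def Qc {n r : ℕ} (Q : Matrix (Fin n) (Fin n) ℝ)
    (A0 : Fin r → Matrix (Fin n) (Fin n) ℝ)
    (X : Matrix (Fin n) (Fin n) ℝ) : Matrix (Fin n) (Fin n) ℝ :=
  Q + Pi11 A0 X

/-- `A_c(X) = A − B R_c(X)⁻¹ L_c(X)ᵀ`. -/
def Ac {n m r : ℕ} (A : Matrix (Fin n) (Fin n) ℝ) (B : Matrix (Fin n) (Fin m) ℝ)
    (L : Matrix (Fin n) (Fin m) ℝ) (R : Matrix (Fin m) (Fin m) ℝ)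
    (A0 : Fin r → Matrix (Fin n) (Fin n) ℝ) (B0 : Fin r → Matrix (Fin n) (Fin m) ℝ)
    (X : Matrix (Fin n) (Fin n) ℝ) : Matrix (Fin n) (Fin n) ℝ :=
  A - B * (Rc R B0 X)⁻¹ * (Lc L A0 B0 X)ᵀ

/-- `G_c(X) = B R_c(X)⁻¹ Bᵀ`. -/
def Gc {n m r : ℕ} (B : Matrix (Fin n) (Fin m) ℝ) (R : Matrix (Fin m) (Fin m) ℝ)
    (B0 : Fin r → Matrix (Fin n) (Fin m) ℝ)
    (X : Matrix (Fin n) (Fin n) ℝ) : Matrix (Fin n) (Fin n) ℝ :=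
  B * (Rc R B0 X)⁻¹ * Bᵀ

/-- `H_c(X) = Q_c(X) − L_c(X) R_c(X)⁻¹ L_c(X)ᵀ`. -/
def Hc {n m r : ℕ} (Q : Matrix (Fin n) (Fin n) ℝ) (L : Matrix (Fin n) (Fin m) ℝ)
    (R : Matrix (Fin m) (Fin m) ℝ)
    (A0 : Fin r → Matrix (Fin n) (Fin n) ℝ) (B0 : Fin r → Matrix (Fin n) (Fin m) ℝ)
    (X : Matrix (Fin n) (Fin n) ℝ) : Matrix (Fin n) (Fin n) ℝ :=
  Qc Q A0 X - Lc L A0 B0 X * (Rc R B0 X)⁻¹ * (Lc L A0 B0 X)ᵀ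

/-- The SCARE residual
`𝓡(X) = AᵀX + XA + Q_c(X) − (XB + L_c(X)) R_c(X)⁻¹ (XB + L_c(X))ᵀ`. -/
def scareRes {n m r : ℕ} (A : Matrix (Fin n) (Fin n) ℝ) (B : Matrix (Fin n) (Fin m) ℝ)
    (Q : Matrix (Fin n) (Fin n) ℝ) (L : Matrix (Fin n) (Fin m) ℝ)
    (R : Matrix (Fin m) (Fin m) ℝ)
    (A0 : Fin r → Matrix (Fin n) (Fin n) ℝ) (B0 : Fin r → Matrix (Fin n) (Fin m) ℝ)
    (X : Matrix (Fin n) (Fin n) ℝ) : Matrix (Fin n) (Fin n) ℝ :=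
  Aᵀ * X + X * A + Qc Q A0 X -
    (X * B + Lc L A0 B0 X) * (Rc R B0 X)⁻¹ * (X * B + Lc L A0 B0 X)ᵀ

/-- `Ω(X) = [−G_c(X), −A_c(X); −A_c(X)ᵀ, H_c(X)]`. -/
def Omega {n m r : ℕ} (A : Matrix (Fin n) (Fin n) ℝ) (B : Matrix (Fin n) (Fin m) ℝ)
    (Q : Matrix (Fin n) (Fin n) ℝ) (L : Matrix (Fin n) (Fin m) ℝ)
    (R : Matrix (Fin m) (Fin m) ℝ)
    (A0 : Fin r → Matrix (Fin n) (Fin n) ℝ) (B0 : Fin r → Matrix (Fin n) (Fin m) ℝ)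
    (X : Matrix (Fin n) (Fin n) ℝ) : Matrix (Fin n ⊕ Fin n) (Fin n ⊕ Fin n) ℝ :=
  fromBlocks (-(Gc B R B0 X)) (-(Ac A B L R A0 B0 X)) (-(Ac A B L R A0 B0 X))ᵀ
    (Hc Q L R A0 B0 X)

/-- The `2n×n` matrix `[X; −Iₙ]` stacking `X` over `−Iₙ`. -/
def stackNegI {n : ℕ} (X : Matrix (Fin n) (Fin n) ℝ) :
    Matrix (Fin n ⊕ Fin n) (Fin n) ℝ :=
  fromRows X (-1)

/-- The pair `(A, B)` is stabilizable: `yᴴ(A − λI) = 0`, `yᴴB = 0`, `Re λ ≥ 0` imply `y = 0`. -/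
def Stabilizable {n m : ℕ} (A : Matrix (Fin n) (Fin n) ℝ)
    (B : Matrix (Fin n) (Fin m) ℝ) : Prop :=
  ∀ (lam : ℂ) (y : Fin n → ℂ), 0 ≤ lam.re →
    vecMul (star y) (A.map Complex.ofReal - lam • 1) = 0 →
    vecMul (star y) (B.map Complex.ofReal) = 0 → y = 0

/-- The pair `(C, A)` is detectable: `(A − λI)z = 0`, `Cz = 0`, `Re λ ≥ 0` imply `z = 0`. -/
def Detectable {p n : ℕ} (C : Matrix (Fin p) (Fin n) ℝ)
    (A : Matrix (Fin n) (Fin n) ℝ) : Prop :=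
  ∀ (lam : ℂ) (z : Fin n → ℂ), 0 ≤ lam.re →
    mulVec (A.map Complex.ofReal - lam • 1) z = 0 →
    mulVec (C.map Complex.ofReal) z = 0 → z = 0

/-- A real square matrix is stable if all its (complex) eigenvalues have negative real part. -/
def IsStableMatrix {n : ℕ} (M : Matrix (Fin n) (Fin n) ℝ) : Prop :=
  ∀ μ ∈ spectrum ℂ (M.map Complex.ofReal), μ.re < 0

/-- Kernel condition: `(Q − LR⁻¹Lᵀ)z = 0` implies `Lᵀz = 0` and `A₀ⁱ z = 0` for all `i`. -/
def KernelCondition {n m r : ℕ} (Q : Matrix (Fin n) (Fin n) ℝ)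
    (L : Matrix (Fin n) (Fin m) ℝ) (R : Matrix (Fin m) (Fin m) ℝ)
    (A0 : Fin r → Matrix (Fin n) (Fin n) ℝ) : Prop :=
  ∀ z : Fin n → ℂ,
    mulVec ((Q - L * R⁻¹ * Lᵀ).map Complex.ofReal) z = 0 →
    mulVec (Lᵀ.map Complex.ofReal) z = 0 ∧
      ∀ i, mulVec ((A0 i).map Complex.ofReal) z = 0

/-- `Γ(X) = [[0, −A, −B], [−Aᵀ, Q_c(X), L_c(X)], [−Bᵀ, L_c(X)ᵀ, R_c(X)]]`. -/
def Gamma {n m r : ℕ} (A : Matrix (Fin n) (Fin n) ℝ) (B : Matrix (Fin n) (Fin m) ℝ)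
    (Q : Matrix (Fin n) (Fin n) ℝ) (L : Matrix (Fin n) (Fin m) ℝ)
    (R : Matrix (Fin m) (Fin m) ℝ)
    (A0 : Fin r → Matrix (Fin n) (Fin n) ℝ) (B0 : Fin r → Matrix (Fin n) (Fin m) ℝ)
    (X : Matrix (Fin n) (Fin n) ℝ) :
    Matrix ((Fin n ⊕ Fin n) ⊕ Fin m) ((Fin n ⊕ Fin n) ⊕ Fin m) ℝ :=
  fromBlocks (fromBlocks 0 (-A) (-Aᵀ) (Qc Q A0 X))
    (fromRows (-B) (Lc L A0 B0 X))
    (fromRows (-B) (Lc L A0 B0 X))ᵀ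
    (Rc R B0 X)

/-- `F_W(Y) = [Y; −Iₙ]ᵀ (Ω(Y) − Ω(W)) [Y; −Iₙ]`. -/
def FW {n m r : ℕ} (A : Matrix (Fin n) (Fin n) ℝ) (B : Matrix (Fin n) (Fin m) ℝ)
    (Q : Matrix (Fin n) (Fin n) ℝ) (L : Matrix (Fin n) (Fin m) ℝ)
    (R : Matrix (Fin m) (Fin m) ℝ)
    (A0 : Fin r → Matrix (Fin n) (Fin n) ℝ) (B0 : Fin r → Matrix (Fin n) (Fin m) ℝ)
    (W Y : Matrix (Fin n) (Fin n) ℝ) : Matrix (Fin n) (Fin n) ℝ :=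
  (stackNegI Y)ᵀ * (Omega A B Q L R A0 B0 Y - Omega A B Q L R A0 B0 W) * stackNegI Y

/-- `𝓕_W(Z) = Kᵀ Π(Z) K` with `K = [−Iₙ; R_c(W)⁻¹ (L_c(W) + W B)ᵀ]`. -/
def Fcal {n m r : ℕ} (B : Matrix (Fin n) (Fin m) ℝ)
    (L : Matrix (Fin n) (Fin m) ℝ) (R : Matrix (Fin m) (Fin m) ℝ)
    (A0 : Fin r → Matrix (Fin n) (Fin n) ℝ) (B0 : Fin r → Matrix (Fin n) (Fin m) ℝ)
    (W Z : Matrix (Fin n) (Fin n) ℝ) : Matrix (Fin n) (Fin n) ℝ :=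
  (fromRows (-1 : Matrix (Fin n) (Fin n) ℝ)
      ((Rc R B0 W)⁻¹ * (Lc L A0 B0 W + W * B)ᵀ))ᵀ *
    PiBlock A0 B0 Z *
    fromRows (-1 : Matrix (Fin n) (Fin n) ℝ)
      ((Rc R B0 W)⁻¹ * (Lc L A0 B0 W + W * B)ᵀ)

section SCAREAux
open NormedSpace Topology

attribute [local instance] Matrix.linftyOpNormedRing Matrix.linftyOpNormedAlgebra

variable {n : ℕ}

private lemma psd_conj {p q : ℕ} {D : Matrix (Fin p) (Fin p) ℝ} (hD : D.PosSemidef)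
    (C : Matrix (Fin p) (Fin q) ℝ) : (Cᵀ * D * C).PosSemidef := by
  have := hD.conjTranspose_mul_mul_same C
  rwa [Matrix.conjTranspose_eq_transpose_of_trivial] at this

private lemma psd_sum {p r : ℕ} (f : Fin r → Matrix (Fin p) (Fin p) ℝ)
    (h : ∀ i, (f i).PosSemidef) : (∑ i, f i).PosSemidef := by
  classical
  exact Finset.sum_induction f _ (fun a b ha hb => ha.add hb) Matrix.PosSemidef.zero
    (fun i _ => h i)

private lemma scalar_decay {μ : ℂ} (hμ : μ.re < 0) (j : ℕ) (c : ℂ) :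
    Tendsto (fun k : ℕ => Complex.exp ((k : ℂ) * μ) * ((k : ℂ) ^ j * c)) atTop (𝓝 0) := by
  rw [tendsto_zero_iff_norm_tendsto_zero]
  set b : ℝ := -μ.re with hb
  have hb0 : 0 < b := by simp only [hb]; linarith
  have h1 := Real.tendsto_pow_mul_exp_neg_atTop_nhds_zero j
  have h2 : Tendsto (fun k : ℕ => b * (k : ℝ)) atTop atTop :=
    (tendsto_natCast_atTop_atTop (R := ℝ)).const_mul_atTop hb0
  have h3 := (h1.comp h2).mul_const (b⁻¹ ^ j * ‖c‖)
  rw [zero_mul] at h3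
  refine h3.congr fun k => ?_
  have hnorm : ‖Complex.exp ((k : ℂ) * μ)‖ = Real.exp ((k : ℝ) * μ.re) := by
    rw [Complex.norm_exp]
    norm_num
  have hbne : b ≠ 0 := ne_of_gt hb0
  simp only [Function.comp, norm_mul, norm_pow, Complex.norm_natCast, hnorm]
  have hexp : Real.exp (-(b * (k : ℝ))) = Real.exp ((k : ℝ) * μ.re) := by
    congr 1
    rw [hb]; ring
  rw [hexp, mul_pow]
  field_simp
  rw [mul_right_comm (b ^ j), ← mul_pow, mul_one_div_cancel hbne, one_pow, one_mul]




private lemma gen_decay (Mc : Matrix (Fin n) (Fin n) ℂ) {μ : ℂ} (hμ : μ.re < 0) (d : ℕ)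
    (w : Fin n → ℂ) (hw : ((Mc - μ • 1) ^ d) *ᵥ w = 0) :
    Tendsto (fun k : ℕ => exp ((k : ℂ) • Mc) *ᵥ w) atTop (𝓝 0) := by
  set N := Mc - μ • (1 : Matrix (Fin n) (Fin n) ℂ) with hN
  let φ : Matrix (Fin n) (Fin n) ℂ →ₗ[ℂ] (Fin n → ℂ) :=
    { toFun := fun E => E *ᵥ w
      map_add' := fun E F => Matrix.add_mulVec E F w
      map_smul' := fun c E => Matrix.smul_mulVec c E w }
  have key : ∀ k : ℕ, exp ((k : ℂ) • Mc) *ᵥ w =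
      ∑ j ∈ Finset.range d,
        (Complex.exp ((k : ℂ) * μ) * ((k : ℂ) ^ j * ((j.factorial : ℂ))⁻¹)) • ((N ^ j) *ᵥ w) := by
    intro k
    have hsplit : (k : ℂ) • Mc = ((k : ℂ) * μ) • (1 : Matrix (Fin n) (Fin n) ℂ) + (k : ℂ) • N := by
      rw [hN, smul_sub, smul_smul]
      abel
    have hcomm : Commute (((k : ℂ) * μ) • (1 : Matrix (Fin n) (Fin n) ℂ)) ((k : ℂ) • N) :=
      ((Commute.one_left N).smul_left _).smul_right _
    rw [hsplit, Matrix.exp_add_of_commute _ _ hcomm]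
    have hsc : exp (((k : ℂ) * μ) • (1 : Matrix (Fin n) (Fin n) ℂ))
        = Complex.exp ((k : ℂ) * μ) • (1 : Matrix (Fin n) (Fin n) ℂ) := by
      rw [← Algebra.algebraMap_eq_smul_one, ← Algebra.algebraMap_eq_smul_one,
        Complex.exp_eq_exp_ℂ]
      exact (algebraMap_exp_comm _).symm
    have hexpN : exp ((k : ℂ) • N) *ᵥ w
        = ∑ j ∈ Finset.range d, ((k : ℂ) ^ j * ((j.factorial : ℂ))⁻¹) • ((N ^ j) *ᵥ w) := by
      have hsum := expSeries_summable' (𝕂 := ℂ) ((k : ℂ) • N)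
      calc exp ((k : ℂ) • N) *ᵥ w
          = φ.toContinuousLinearMap (∑' i : ℕ, ((i.factorial : ℂ))⁻¹ • ((k : ℂ) • N) ^ i) := by
            rw [exp_eq_tsum ℂ]
            simp [φ]
        _ = ∑' i : ℕ, φ.toContinuousLinearMap (((i.factorial : ℂ))⁻¹ • ((k : ℂ) • N) ^ i) :=
            φ.toContinuousLinearMap.map_tsum hsum
        _ = ∑' i : ℕ, ((i.factorial : ℂ))⁻¹ • ((((k : ℂ) • N) ^ i) *ᵥ w) := by
            simp [φ]
        _ = ∑ j ∈ Finset.range d, ((j.factorial : ℂ))⁻¹ • ((((k : ℂ) • N) ^ j) *ᵥ w) := by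
            refine tsum_eq_sum fun j hj => ?_
            have hjd : d ≤ j := by simpa using hj
            have hz : (N ^ j) *ᵥ w = 0 := by
              have hsplit2 : N ^ j = N ^ (j - d) * N ^ d := by
                rw [← pow_add]
                congr 1
                omega
              rw [hsplit2, ← Matrix.mulVec_mulVec, hw, Matrix.mulVec_zero]
            rw [smul_pow, Matrix.smul_mulVec, hz, smul_zero, smul_zero]
        _ = ∑ j ∈ Finset.range d, ((k : ℂ) ^ j * ((j.factorial : ℂ))⁻¹) • ((N ^ j) *ᵥ w) := by
            refine Finset.sum_congr rfl fun j hj => ?_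
            rw [smul_pow, Matrix.smul_mulVec, smul_smul, mul_comm]
    rw [hsc, smul_mul_assoc, one_mul, Matrix.smul_mulVec, hexpN, Finset.smul_sum]
    refine Finset.sum_congr rfl fun j hj => ?_
    rw [smul_smul]
  rw [funext key]
  have h0 : Tendsto (fun k : ℕ => ∑ j ∈ Finset.range d,
      (Complex.exp ((k : ℂ) * μ) * ((k : ℂ) ^ j * ((j.factorial : ℂ))⁻¹)) • ((N ^ j) *ᵥ w))
      atTop (𝓝 (∑ j ∈ Finset.range d, (0 : Fin n → ℂ))) := by
    refine tendsto_finset_sum _ fun j hj => ?_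
    have := (scalar_decay hμ j ((j.factorial : ℂ))⁻¹).smul_const ((N ^ j) *ᵥ w)
    simpa using this
  simpa using h0


private lemma complex_decay (Mc : Matrix (Fin n) (Fin n) ℂ)
    (hM : ∀ μ ∈ spectrum ℂ Mc, μ.re < 0) (w : Fin n → ℂ) :
    Tendsto (fun k : ℕ => exp ((k : ℂ) • Mc) *ᵥ w) atTop (𝓝 0) := by
  let T : Submodule ℂ (Fin n → ℂ) :=
    { carrier := {x | Tendsto (fun k : ℕ => exp ((k : ℂ) • Mc) *ᵥ x) atTop (𝓝 0)}
      add_mem' := by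
        intro a b ha hb
        have := ha.add hb
        simpa [Matrix.mulVec_add] using this
      zero_mem' := by simpa [Matrix.mulVec_zero] using
        (tendsto_const_nhds : Tendsto (fun _ : ℕ => (0 : Fin n → ℂ)) atTop (𝓝 0))
      smul_mem' := by
        intro c a ha
        have := ha.const_smul c
        simpa [Matrix.mulVec_smul] using this }
  suffices h : (⊤ : Submodule ℂ (Fin n → ℂ)) ≤ T from h Submodule.mem_top
  rw [← Module.End.iSup_maxGenEigenspace_eq_top (Matrix.toLinAlgEquiv' Mc)]
  refine iSup_le fun μ x hx => ?_
  obtain ⟨d, hd⟩ := (Module.End.mem_maxGenEigenspace _ _ _).mp hx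
  by_cases hx0 : x = 0
  · rw [hx0]; exact T.zero_mem
  · set f : Module.End ℂ (Fin n → ℂ) := Matrix.toLinAlgEquiv' Mc with hf
    have hmem : x ∈ Module.End.genEigenspace f μ d := by
      rw [Module.End.mem_genEigenspace_nat]
      exact hd
    have hne : Module.End.genEigenspace f μ d ≠ ⊥ :=
      Submodule.ne_bot_iff _ |>.mpr ⟨x, hmem, hx0⟩
    have heig : Module.End.HasEigenvalue f μ :=
      Module.End.hasEigenvalue_of_hasGenEigenvalue (k := d) hne
    have hspec : μ ∈ spectrum ℂ Mc := by
      have h1 : μ ∈ spectrum ℂ f := Module.End.hasEigenvalue_iff_mem_spectrum.mp heig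
      rw [hf] at h1
      rwa [AlgEquiv.spectrum_eq (Matrix.toLinAlgEquiv' (R := ℂ) (n := Fin n)) Mc] at h1
    have hre := hM μ hspec
    have hd' : ((Mc - μ • 1) ^ d) *ᵥ x = 0 := by
      have e1 : (f - μ • 1) ^ d
          = Matrix.toLinAlgEquiv' ((Mc - μ • 1) ^ d) := by
        rw [hf, map_pow, map_sub, _root_.map_smul, _root_.map_one]
      rw [e1] at hd
      exact hd
    exact gen_decay Mc hre d x hd'


private lemma real_decay (M : Matrix (Fin n) (Fin n) ℝ)
    (hM : ∀ μ ∈ spectrum ℂ (M.map Complex.ofReal), μ.re < 0) (v : Fin n → ℝ) :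
    Tendsto (fun k : ℕ => exp ((k : ℝ) • M) *ᵥ v) atTop (𝓝 0) := by
  set Mc := M.map Complex.ofReal with hMc
  have hcont : Continuous (Complex.ofRealHom.mapMatrix :
      Matrix (Fin n) (Fin n) ℝ →+* Matrix (Fin n) (Fin n) ℂ) := by
    let ψ : Matrix (Fin n) (Fin n) ℝ →ₗ[ℝ] Matrix (Fin n) (Fin n) ℂ :=
      { toFun := fun E => E.map Complex.ofReal
        map_add' := fun E F => by
          ext i j
          simp [Matrix.map_apply]
        map_smul' := fun c E => by
          ext i j
          simp [Matrix.map_apply] }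
    exact ψ.continuous_of_finiteDimensional
  have hbridge : ∀ k : ℕ, (exp ((k : ℝ) • M)).map Complex.ofReal
      = exp ((k : ℂ) • Mc) := by
    intro k
    have h1 := map_exp (Complex.ofRealHom.mapMatrix :
      Matrix (Fin n) (Fin n) ℝ →+* Matrix (Fin n) (Fin n) ℂ) hcont ((k : ℝ) • M)
    have h2 : (Complex.ofRealHom.mapMatrix ((k : ℝ) • M) :
        Matrix (Fin n) (Fin n) ℂ) = (k : ℂ) • Mc := by
      ext i j
      simp [Matrix.map_apply, hMc]
    have h3 : (exp : Matrix (Fin n) (Fin n) ℂ → _) = exp := rfl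
    calc (exp ((k : ℝ) • M)).map Complex.ofReal
        = Complex.ofRealHom.mapMatrix (exp ((k : ℝ) • M)) := rfl
      _ = exp ((k : ℂ) • Mc) := by rw [← h2]; exact h1
      _ = exp ((k : ℂ) • Mc) := by rw [h3]
  have hc := complex_decay Mc hM (fun i => (v i : ℂ))
  rw [tendsto_pi_nhds]
  intro i
  rw [tendsto_pi_nhds] at hc
  have hci := hc i
  have heq : ∀ k : ℕ, ((exp ((k : ℝ) • M) *ᵥ v) i : ℂ)
      = (exp ((k : ℂ) • Mc) *ᵥ fun i => (v i : ℂ)) i := by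
    intro k
    rw [← hbridge k]
    simp [Matrix.mulVec, dotProduct, Matrix.map_apply]
  have hre := (Complex.continuous_re.tendsto _).comp hci
  simp only [Pi.zero_apply, Complex.zero_re] at hre
  refine hre.congr fun k => ?_
  rw [Function.comp_apply, ← heq k, Complex.ofReal_re]


private lemma lyapunov_quad (M Δ W : Matrix (Fin n) (Fin n) ℝ)
    (hspec : ∀ μ ∈ spectrum ℂ (M.map Complex.ofReal), μ.re < 0)
    (hW : ∀ x : Fin n → ℝ, 0 ≤ x ⬝ᵥ (W *ᵥ x))
    (heq : Mᵀ * Δ + Δ * M = -W) (v : Fin n → ℝ) :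
    0 ≤ v ⬝ᵥ (Δ *ᵥ v) := by
  set u : ℝ → (Fin n → ℝ) := fun t => exp (t • M) *ᵥ v with hu
  set g : ℝ → ℝ := fun t => u t ⬝ᵥ (Δ *ᵥ u t) with hg
  let φ : Matrix (Fin n) (Fin n) ℝ →ₗ[ℝ] (Fin n → ℝ) :=
    { toFun := fun E => E *ᵥ v
      map_add' := fun E F => Matrix.add_mulVec E F v
      map_smul' := fun c E => Matrix.smul_mulVec c E v }
  have hu' : ∀ t, HasDerivAt u (M *ᵥ u t) t := by
    intro t
    have hder := hasDerivAt_exp_smul_const' (𝕂 := ℝ) M t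
    have := (φ.toContinuousLinearMap.hasFDerivAt.comp_hasDerivAt t hder)
    have e : M *ᵥ u t = (M * exp (t • M)) *ᵥ v := by simp only [hu, Matrix.mulVec_mulVec]
    rw [e]; exact this
  have hgder : ∀ t, HasDerivAt g (-(u t ⬝ᵥ (W *ᵥ u t))) t := by
    intro t
    have hcomp : ∀ i : Fin n, HasDerivAt (fun s => u s i) ((M *ᵥ u t) i) t := fun i =>
      ((ContinuousLinearMap.proj (R := ℝ) (φ := fun _ : Fin n => ℝ) i).hasFDerivAt.comp_hasDerivAt
        t (hu' t))
    have hcompw : ∀ i : Fin n, HasDerivAt (fun s => (Δ *ᵥ u s) i) ((Δ *ᵥ (M *ᵥ u t)) i) t := by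
      intro i
      let ψ : (Fin n → ℝ) →L[ℝ] ℝ :=
        (ContinuousLinearMap.proj (R := ℝ) (φ := fun _ : Fin n => ℝ) i).comp
          (Δ.mulVecLin.toContinuousLinearMap)
      have := ψ.hasFDerivAt.comp_hasDerivAt t (hu' t)
      exact this
    have hsum : HasDerivAt (fun s => ∑ i, u s i * (Δ *ᵥ u s) i)
        (∑ i, ((M *ᵥ u t) i * (Δ *ᵥ u t) i + u t i * (Δ *ᵥ (M *ᵥ u t)) i)) t :=
      HasDerivAt.fun_sum fun i _ => (hcomp i).mul (hcompw i)
    have quad : ∀ x : Fin n → ℝ,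
        (M *ᵥ x) ⬝ᵥ (Δ *ᵥ x) + x ⬝ᵥ (Δ *ᵥ (M *ᵥ x)) = -(x ⬝ᵥ (W *ᵥ x)) := by
      intro x
      have e2 : (M *ᵥ x) ⬝ᵥ (Δ *ᵥ x) = x ⬝ᵥ (Mᵀ *ᵥ (Δ *ᵥ x)) := by
        rw [dotProduct_comm, Matrix.dotProduct_mulVec, dotProduct_comm,
          Matrix.mulVec_transpose]
      rw [e2, Matrix.mulVec_mulVec, Matrix.mulVec_mulVec, ← dotProduct_add,
        ← Matrix.add_mulVec, heq, Matrix.neg_mulVec, dotProduct_neg]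
    have hg_eq : g = fun s => ∑ i, u s i * (Δ *ᵥ u s) i := rfl
    rw [hg_eq]
    convert hsum using 1
    have e1 : ∑ i, ((M *ᵥ u t) i * (Δ *ᵥ u t) i + u t i * (Δ *ᵥ (M *ᵥ u t)) i)
        = (M *ᵥ u t) ⬝ᵥ (Δ *ᵥ u t) + u t ⬝ᵥ (Δ *ᵥ (M *ᵥ u t)) := by
      rw [Finset.sum_add_distrib]; rfl
    rw [e1, quad (u t)]
  have hant : Antitone g :=
    antitone_of_deriv_nonpos (fun t => (hgder t).differentiableAt)
      (fun t => by rw [(hgder t).deriv]; exact neg_nonpos.mpr (hW (u t)))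
  have hg0 : g 0 = v ⬝ᵥ (Δ *ᵥ v) := by
    simp [hg, hu, Matrix.one_mulVec]
  have hdecay := real_decay M hspec v
  have hFcont : Continuous (fun p : Fin n → ℝ => p ⬝ᵥ (Δ *ᵥ p)) := by
    simp only [dotProduct, Matrix.mulVec]
    exact continuous_finset_sum _ fun i _ => (continuous_apply i).mul
      (continuous_finset_sum _ fun j _ => (continuous_const.mul (continuous_apply j)))
  have hlim : Tendsto (fun k : ℕ => g (k : ℝ)) atTop (𝓝 0) := by
    have h := (hFcont.tendsto 0).comp hdecay
    simp only [Matrix.mulVec_zero, dotProduct_zero] at h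
    exact h.congr fun k => rfl
  have hle : 0 ≤ g 0 :=
    le_of_tendsto hlim (Filter.Eventually.of_forall fun k => hant (Nat.cast_nonneg k))
  rwa [hg0] at hle


end SCAREAux

set_option maxHeartbeats 4000000

/-- If R ≻ 0, 0 ⪯ X ⪯ X_* with 𝓡(X_*) = 0 and A_c(X) − G_c(X)X_* stable, then any
solution Z of the CARE frozen at X satisfies Z ⪯ X_*. -/
theorem stmt12 (n m r : ℕ) (hn : 0 < n) (hm : 0 < m) (hr : 0 < r)
    (A Q : Matrix (Fin n) (Fin n) ℝ) (B L : Matrix (Fin n) (Fin m) ℝ)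
    (R : Matrix (Fin m) (Fin m) ℝ)
    (A0 : Fin r → Matrix (Fin n) (Fin n) ℝ) (B0 : Fin r → Matrix (Fin n) (Fin m) ℝ)
    (hQ : Q.IsHermitian) (hRsymm : R.IsHermitian)
    (hRpd : R.PosDef)
    (X Xs Z : Matrix (Fin n) (Fin n) ℝ)
    (hX : X.IsHermitian) (hXs : Xs.IsHermitian) (hZ : Z.IsHermitian)
    (hXpsd : X.PosSemidef) (hle : (Xs - X).PosSemidef)
    (hsol : scareRes A B Q L R A0 B0 Xs = 0)
    (hstable : IsStableMatrix (Ac A B L R A0 B0 X - Gc B R B0 X * Xs))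
    (hfroz : (stackNegI Z)ᵀ * Omega A B Q L R A0 B0 X * stackNegI Z = 0) :
    (Xs - Z).PosSemidef := by
  classical
  have tX : Xᵀ = X := by
    rw [← Matrix.conjTranspose_eq_transpose_of_trivial]; exact hX
  have tXs : Xsᵀ = Xs := by
    rw [← Matrix.conjTranspose_eq_transpose_of_trivial]; exact hXs
  have tZ : Zᵀ = Z := by
    rw [← Matrix.conjTranspose_eq_transpose_of_trivial]; exact hZ
  have tR : Rᵀ = R := by
    rw [← Matrix.conjTranspose_eq_transpose_of_trivial]; exact hRsymm
  have tD : (Xs - X)ᵀ = Xs - X := by rw [Matrix.transpose_sub, tXs, tX]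
  have tDel : (Xs - Z)ᵀ = Xs - Z := by rw [Matrix.transpose_sub, tXs, tZ]
  have hXs_psd : Xs.PosSemidef := by
    have h := hXpsd.add hle
    simpa using h
  have hPi22X : (Pi22 B0 X).PosSemidef := psd_sum _ fun i => psd_conj hXpsd (B0 i)
  have hPi22Xs : (Pi22 B0 Xs).PosSemidef := psd_sum _ fun i => psd_conj hXs_psd (B0 i)
  have hR0pd : (Rc R B0 X).PosDef := hRpd.add_posSemidef hPi22X
  have hR1pd : (Rc R B0 Xs).PosDef := hRpd.add_posSemidef hPi22Xs
  have hR0det : IsUnit (Rc R B0 X).det := (Matrix.isUnit_iff_isUnit_det _).mp hR0pd.isUnit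
  have hR1det : IsUnit (Rc R B0 Xs).det := (Matrix.isUnit_iff_isUnit_det _).mp hR1pd.isUnit
  have hR0inv : Rc R B0 X * (Rc R B0 X)⁻¹ = 1 := Matrix.mul_nonsing_inv _ hR0det
  have hR0inv' : (Rc R B0 X)⁻¹ * Rc R B0 X = 1 := Matrix.nonsing_inv_mul _ hR0det
  have hR1inv' : (Rc R B0 Xs)⁻¹ * Rc R B0 Xs = 1 := Matrix.nonsing_inv_mul _ hR1det
  have tPi22X : (Pi22 B0 X)ᵀ = Pi22 B0 X := by
    simp [Pi22, Matrix.transpose_sum, Matrix.transpose_mul, Matrix.transpose_transpose, tX,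
      Matrix.mul_assoc]
  have tPi22Xs : (Pi22 B0 Xs)ᵀ = Pi22 B0 Xs := by
    simp [Pi22, Matrix.transpose_sum, Matrix.transpose_mul, Matrix.transpose_transpose, tXs,
      Matrix.mul_assoc]
  have tR0 : (Rc R B0 X)ᵀ = Rc R B0 X := by
    show (R + Pi22 B0 X)ᵀ = R + Pi22 B0 X
    rw [Matrix.transpose_add, tR, tPi22X]
  have tR1 : (Rc R B0 Xs)ᵀ = Rc R B0 Xs := by
    show (R + Pi22 B0 Xs)ᵀ = R + Pi22 B0 Xs
    rw [Matrix.transpose_add, tR, tPi22Xs]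
  have tR0i : ((Rc R B0 X)⁻¹)ᵀ = (Rc R B0 X)⁻¹ := by
    rw [Matrix.transpose_nonsing_inv, tR0]
  have tR1i : ((Rc R B0 Xs)⁻¹)ᵀ = (Rc R B0 Xs)⁻¹ := by
    rw [Matrix.transpose_nonsing_inv, tR1]
  -- the frozen Riccati equation satisfied by `Z`
  have hfrozen : Aᵀ * Z + Z * A + Qc Q A0 X
      - (Z * B + Lc L A0 B0 X) * (Rc R B0 X)⁻¹ * (Bᵀ * Z + (Lc L A0 B0 X)ᵀ) = 0 := by
    have h := hfroz
    unfold stackNegI Omega at h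
    rw [Matrix.transpose_fromRows, Matrix.fromCols_mul_fromBlocks,
      Matrix.fromCols_mul_fromRows] at h
    rw [← h]
    unfold Ac Gc Hc
    simp only [Matrix.transpose_neg, Matrix.transpose_one, Matrix.transpose_sub,
      Matrix.transpose_mul, Matrix.transpose_transpose, tZ, tR0i]
    simp only [Matrix.add_mul, Matrix.mul_add, Matrix.sub_mul, Matrix.mul_sub,
      Matrix.neg_mul, Matrix.mul_neg, Matrix.mul_one, Matrix.one_mul, Matrix.mul_assoc,
      Finset.sum_add_distrib, Finset.sum_sub_distrib, Matrix.sum_mul, Matrix.mul_sum] <;> abel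
  -- the SCARE at `Xs`
  have hsolved : Aᵀ * Xs + Xs * A + Qc Q A0 Xs
      = (Xs * B + Lc L A0 B0 Xs) * (Rc R B0 Xs)⁻¹ * (Bᵀ * Xs + (Lc L A0 B0 Xs)ᵀ) := by
    have h := hsol
    unfold scareRes at h
    rw [show (Xs * B + Lc L A0 B0 Xs)ᵀ = Bᵀ * Xs + (Lc L A0 B0 Xs)ᵀ from by
      rw [Matrix.transpose_add, Matrix.transpose_mul, tXs]] at h
    exact sub_eq_zero.mp h
  -- linearity of the Π-operators
  have eQ : Qc Q A0 Xs = Qc Q A0 X + Pi11 A0 (Xs - X) := by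
    unfold Qc Pi11
    simp only [Matrix.mul_sub, Matrix.sub_mul, Finset.sum_sub_distrib]
    abel
  have eL : Lc L A0 B0 Xs = Lc L A0 B0 X + Pi12 A0 B0 (Xs - X) := by
    unfold Lc Pi12
    simp only [Matrix.mul_sub, Matrix.sub_mul, Finset.sum_sub_distrib]
    abel
  have eR : Rc R B0 Xs = Rc R B0 X + Pi22 B0 (Xs - X) := by
    unfold Rc Pi22
    simp only [Matrix.mul_sub, Matrix.sub_mul, Finset.sum_sub_distrib]
    abel
  have tP12 : (Pi12 A0 B0 (Xs - X))ᵀ = ∑ i, (B0 i)ᵀ * (Xs - X) * A0 i := by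
    unfold Pi12
    simp [Matrix.transpose_sum, Matrix.transpose_mul, Matrix.transpose_transpose, tD,
      Matrix.mul_assoc]
  have eSum : (∑ i, (B0 i)ᵀ * (Xs - X) * A0 i)
      = (Lc L A0 B0 Xs)ᵀ - (Lc L A0 B0 X)ᵀ := by
    rw [← tP12, show Pi12 A0 B0 (Xs - X) = Lc L A0 B0 Xs - Lc L A0 B0 X from by
      rw [eL]; abel, Matrix.transpose_sub]
  -- the closed-loop gain at `Xs`
  set K : Matrix (Fin m) (Fin n) ℝ :=
    (Rc R B0 Xs)⁻¹ * (Bᵀ * Xs + (Lc L A0 B0 Xs)ᵀ) with hKdef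
  have hKt : Kᵀ = (Xs * B + Lc L A0 B0 Xs) * (Rc R B0 Xs)⁻¹ := by
    rw [hKdef]
    simp only [Matrix.transpose_mul, Matrix.transpose_add, Matrix.transpose_transpose, tXs, tR1i]
  have hS1K : (Xs * B + Lc L A0 B0 Xs) * K
      = (Xs * B + Lc L A0 B0 Xs) * (Rc R B0 Xs)⁻¹ * (Bᵀ * Xs + (Lc L A0 B0 Xs)ᵀ) := by
    rw [hKdef, ← Matrix.mul_assoc]
  have hKS1t : Kᵀ * (Bᵀ * Xs + (Lc L A0 B0 Xs)ᵀ)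
      = (Xs * B + Lc L A0 B0 Xs) * (Rc R B0 Xs)⁻¹ * (Bᵀ * Xs + (Lc L A0 B0 Xs)ᵀ) := by
    rw [hKt]
  have hKRK : Kᵀ * Rc R B0 Xs * K
      = (Xs * B + Lc L A0 B0 Xs) * (Rc R B0 Xs)⁻¹ * (Bᵀ * Xs + (Lc L A0 B0 Xs)ᵀ) := by
    rw [hKt, Matrix.mul_assoc (Xs * B + Lc L A0 B0 Xs) (Rc R B0 Xs)⁻¹ (Rc R B0 Xs),
      hR1inv', Matrix.mul_one, hS1K]
  -- cancellation helpers for `Rc R B0 X`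
  have hcanc0 : ∀ V : Matrix (Fin m) (Fin n) ℝ,
      (Rc R B0 X)⁻¹ * (Rc R B0 X * V) = V := fun V => by
    rw [← Matrix.mul_assoc, hR0inv', Matrix.one_mul]
  have hcanc1 : ∀ V : Matrix (Fin m) (Fin n) ℝ,
      Rc R B0 X * ((Rc R B0 X)⁻¹ * V) = V := fun V => by
    rw [← Matrix.mul_assoc, hR0inv, Matrix.one_mul]
  -- expansion of the two quadratic correction terms
  have hP1 : (∑ i, (A0 i - B0 i * K)ᵀ * (Xs - X) * (A0 i - B0 i * K))
      = Pi11 A0 (Xs - X) - Pi12 A0 B0 (Xs - X) * K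
        - Kᵀ * (∑ i, (B0 i)ᵀ * (Xs - X) * A0 i) + Kᵀ * Pi22 B0 (Xs - X) * K := by
    have hterm : ∀ i : Fin r, (A0 i - B0 i * K)ᵀ * (Xs - X) * (A0 i - B0 i * K)
        = (A0 i)ᵀ * (Xs - X) * A0 i - (A0 i)ᵀ * (Xs - X) * B0 i * K
          - Kᵀ * ((B0 i)ᵀ * (Xs - X) * A0 i) + Kᵀ * ((B0 i)ᵀ * (Xs - X) * B0 i) * K := by
      intro i
      rw [Matrix.transpose_sub, Matrix.transpose_mul]
      simp only [Matrix.add_mul, Matrix.mul_add, Matrix.sub_mul, Matrix.mul_sub,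
        Matrix.neg_mul, Matrix.mul_neg, Matrix.mul_one, Matrix.one_mul, Matrix.mul_assoc,
        Finset.sum_add_distrib, Finset.sum_sub_distrib, Matrix.sum_mul, Matrix.mul_sum] <;> abel
    rw [Finset.sum_congr rfl fun i _ => hterm i]
    unfold Pi11 Pi12 Pi22
    simp only [Matrix.add_mul, Matrix.mul_add, Matrix.sub_mul, Matrix.mul_sub,
      Matrix.neg_mul, Matrix.mul_neg, Matrix.mul_one, Matrix.one_mul, Matrix.mul_assoc,
      Finset.sum_add_distrib, Finset.sum_sub_distrib, Matrix.sum_mul, Matrix.mul_sum] <;> abel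
  have hP2 : (K - (Rc R B0 X)⁻¹ * (Bᵀ * Xs + (Lc L A0 B0 X)ᵀ))ᵀ * Rc R B0 X
        * (K - (Rc R B0 X)⁻¹ * (Bᵀ * Xs + (Lc L A0 B0 X)ᵀ))
      = Kᵀ * Rc R B0 X * K - Kᵀ * (Bᵀ * Xs + (Lc L A0 B0 X)ᵀ)
        - (Xs * B + Lc L A0 B0 X) * K
        + (Xs * B + Lc L A0 B0 X) * (Rc R B0 X)⁻¹ * (Bᵀ * Xs + (Lc L A0 B0 X)ᵀ) := by
    have tE : (K - (Rc R B0 X)⁻¹ * (Bᵀ * Xs + (Lc L A0 B0 X)ᵀ))ᵀ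
        = Kᵀ - (Xs * B + Lc L A0 B0 X) * (Rc R B0 X)⁻¹ := by
      simp only [Matrix.transpose_sub, Matrix.transpose_mul, Matrix.transpose_add,
        Matrix.transpose_transpose, tXs, tR0i]
    rw [tE]
    calc (Kᵀ - (Xs * B + Lc L A0 B0 X) * (Rc R B0 X)⁻¹) * Rc R B0 X
        * (K - (Rc R B0 X)⁻¹ * (Bᵀ * Xs + (Lc L A0 B0 X)ᵀ))
        = Kᵀ * Rc R B0 X * K
          - Kᵀ * (Rc R B0 X * ((Rc R B0 X)⁻¹ * (Bᵀ * Xs + (Lc L A0 B0 X)ᵀ)))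
          - (Xs * B + Lc L A0 B0 X) * ((Rc R B0 X)⁻¹ * (Rc R B0 X * K))
          + (Xs * B + Lc L A0 B0 X) * ((Rc R B0 X)⁻¹
              * (Rc R B0 X * ((Rc R B0 X)⁻¹ * (Bᵀ * Xs + (Lc L A0 B0 X)ᵀ)))) := by
          simp only [Matrix.add_mul, Matrix.mul_add, Matrix.sub_mul, Matrix.mul_sub,
          Matrix.neg_mul, Matrix.mul_neg, Matrix.mul_one, Matrix.one_mul, Matrix.mul_assoc,
          Finset.sum_add_distrib, Finset.sum_sub_distrib, Matrix.sum_mul, Matrix.mul_sum] <;> abel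
      _ = _ := by
          rw [hcanc1, hcanc0, ← Matrix.mul_assoc (Xs * B + Lc L A0 B0 X) (Rc R B0 X)⁻¹
            (Bᵀ * Xs + (Lc L A0 B0 X)ᵀ)]
  -- step A : the Lyapunov-type identity
  have tM : (Ac A B L R A0 B0 X - Gc B R B0 X * Xs)ᵀ
      = Aᵀ - Lc L A0 B0 X * (Rc R B0 X)⁻¹ * Bᵀ - Xs * (B * (Rc R B0 X)⁻¹ * Bᵀ) := by
    unfold Ac Gc
    simp only [Matrix.transpose_sub, Matrix.transpose_mul, Matrix.transpose_transpose, tXs, tR0i]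
    simp only [Matrix.add_mul, Matrix.mul_add, Matrix.sub_mul, Matrix.mul_sub,
      Matrix.neg_mul, Matrix.mul_neg, Matrix.mul_one, Matrix.one_mul, Matrix.mul_assoc,
      Finset.sum_add_distrib, Finset.sum_sub_distrib, Matrix.sum_mul, Matrix.mul_sum] <;> abel
  have stepA : (Ac A B L R A0 B0 X - Gc B R B0 X * Xs)ᵀ * (Xs - Z)
        + (Xs - Z) * (Ac A B L R A0 B0 X - Gc B R B0 X * Xs)
        + (Xs - Z) * (B * (Rc R B0 X)⁻¹ * Bᵀ) * (Xs - Z)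
      = (Aᵀ * Xs + Xs * A + Qc Q A0 X
          - (Xs * B + Lc L A0 B0 X) * (Rc R B0 X)⁻¹ * (Bᵀ * Xs + (Lc L A0 B0 X)ᵀ))
        - (Aᵀ * Z + Z * A + Qc Q A0 X
          - (Z * B + Lc L A0 B0 X) * (Rc R B0 X)⁻¹ * (Bᵀ * Z + (Lc L A0 B0 X)ᵀ)) := by
    rw [tM]
    unfold Ac Gc
    simp only [Matrix.add_mul, Matrix.mul_add, Matrix.sub_mul, Matrix.mul_sub,
      Matrix.neg_mul, Matrix.mul_neg, Matrix.mul_one, Matrix.one_mul, Matrix.mul_assoc,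
      Finset.sum_add_distrib, Finset.sum_sub_distrib, Matrix.sum_mul, Matrix.mul_sum] <;> abel
  -- step C : comparison with the solved equation
  have stepC : (Aᵀ * Xs + Xs * A + Qc Q A0 X
        - (Xs * B + Lc L A0 B0 X) * (Rc R B0 X)⁻¹ * (Bᵀ * Xs + (Lc L A0 B0 X)ᵀ))
        + ((∑ i, (A0 i - B0 i * K)ᵀ * (Xs - X) * (A0 i - B0 i * K))
          + (K - (Rc R B0 X)⁻¹ * (Bᵀ * Xs + (Lc L A0 B0 X)ᵀ))ᵀ * Rc R B0 X
            * (K - (Rc R B0 X)⁻¹ * (Bᵀ * Xs + (Lc L A0 B0 X)ᵀ))) = 0 := by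
    rw [hP1, hP2]
    rw [show Qc Q A0 X = Qc Q A0 Xs - Pi11 A0 (Xs - X) from by rw [eQ]; abel]
    rw [show Qc Q A0 Xs
        = (Xs * B + Lc L A0 B0 Xs) * (Rc R B0 Xs)⁻¹ * (Bᵀ * Xs + (Lc L A0 B0 Xs)ᵀ)
          - Aᵀ * Xs - Xs * A from by rw [← hsolved]; abel]
    rw [show Pi12 A0 B0 (Xs - X) = Lc L A0 B0 Xs - Lc L A0 B0 X from by rw [eL]; abel]
    rw [eSum]
    rw [show Pi22 B0 (Xs - X) = Rc R B0 Xs - Rc R B0 X from by rw [eR]; abel]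
    trans ((Xs * B + Lc L A0 B0 Xs) * (Rc R B0 Xs)⁻¹ * (Bᵀ * Xs + (Lc L A0 B0 Xs)ᵀ)
        - (Xs * B + Lc L A0 B0 Xs) * K - Kᵀ * (Bᵀ * Xs + (Lc L A0 B0 Xs)ᵀ)
        + Kᵀ * Rc R B0 Xs * K)
    · simp only [Matrix.add_mul, Matrix.mul_add, Matrix.sub_mul, Matrix.mul_sub,
        Matrix.neg_mul, Matrix.mul_neg, Matrix.mul_one, Matrix.one_mul, Matrix.mul_assoc,
        Finset.sum_add_distrib, Finset.sum_sub_distrib, Matrix.sum_mul, Matrix.mul_sum] <;> abel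
    · rw [hS1K, hKS1t, hKRK]
      abel
  -- the assembled Lyapunov equation
  have master : (Ac A B L R A0 B0 X - Gc B R B0 X * Xs)ᵀ * (Xs - Z)
        + (Xs - Z) * (Ac A B L R A0 B0 X - Gc B R B0 X * Xs)
      = -((∑ i, (A0 i - B0 i * K)ᵀ * (Xs - X) * (A0 i - B0 i * K))
          + ((K - (Rc R B0 X)⁻¹ * (Bᵀ * Xs + (Lc L A0 B0 X)ᵀ))ᵀ * Rc R B0 X
              * (K - (Rc R B0 X)⁻¹ * (Bᵀ * Xs + (Lc L A0 B0 X)ᵀ))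
            + (Xs - Z) * (B * (Rc R B0 X)⁻¹ * Bᵀ) * (Xs - Z))) := by
    have h7 := stepA
    rw [hfrozen, sub_zero] at h7
    have h8 : ((Ac A B L R A0 B0 X - Gc B R B0 X * Xs)ᵀ * (Xs - Z)
          + (Xs - Z) * (Ac A B L R A0 B0 X - Gc B R B0 X * Xs)
          + (Xs - Z) * (B * (Rc R B0 X)⁻¹ * Bᵀ) * (Xs - Z))
        + ((∑ i, (A0 i - B0 i * K)ᵀ * (Xs - X) * (A0 i - B0 i * K))
          + (K - (Rc R B0 X)⁻¹ * (Bᵀ * Xs + (Lc L A0 B0 X)ᵀ))ᵀ * Rc R B0 X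
            * (K - (Rc R B0 X)⁻¹ * (Bᵀ * Xs + (Lc L A0 B0 X)ᵀ))) = 0 := by
      rw [h7]; exact stepC
    rw [eq_neg_iff_add_eq_zero, ← h8]
    abel
  -- positive semidefiniteness of the right-hand side
  have hP1psd : (∑ i, (A0 i - B0 i * K)ᵀ * (Xs - X) * (A0 i - B0 i * K)).PosSemidef :=
    psd_sum _ fun i => psd_conj hle (A0 i - B0 i * K)
  have hP2psd : ((K - (Rc R B0 X)⁻¹ * (Bᵀ * Xs + (Lc L A0 B0 X)ᵀ))ᵀ * Rc R B0 X
      * (K - (Rc R B0 X)⁻¹ * (Bᵀ * Xs + (Lc L A0 B0 X)ᵀ))).PosSemidef :=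
    psd_conj hR0pd.posSemidef _
  have hGpsd : (B * (Rc R B0 X)⁻¹ * Bᵀ).PosSemidef := by
    have h := psd_conj hR0pd.inv.posSemidef Bᵀ
    rwa [Matrix.transpose_transpose] at h
  have hP3psd : ((Xs - Z) * (B * (Rc R B0 X)⁻¹ * Bᵀ) * (Xs - Z)).PosSemidef := by
    have h := psd_conj hGpsd (Xs - Z)
    rwa [tDel] at h
  have hWpsd := hP1psd.add (hP2psd.add hP3psd)
  have hWquad : ∀ x : Fin n → ℝ,
      0 ≤ x ⬝ᵥ (((∑ i, (A0 i - B0 i * K)ᵀ * (Xs - X) * (A0 i - B0 i * K))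
        + ((K - (Rc R B0 X)⁻¹ * (Bᵀ * Xs + (Lc L A0 B0 X)ᵀ))ᵀ * Rc R B0 X
            * (K - (Rc R B0 X)⁻¹ * (Bᵀ * Xs + (Lc L A0 B0 X)ᵀ))
          + (Xs - Z) * (B * (Rc R B0 X)⁻¹ * Bᵀ) * (Xs - Z))) *ᵥ x) := fun x => by
    have h := hWpsd.dotProduct_mulVec_nonneg x
    simpa using h
  have hstable' : ∀ μ ∈ spectrum ℂ
      ((Ac A B L R A0 B0 X - Gc B R B0 X * Xs).map Complex.ofReal), μ.re < 0 := hstable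
  refine .of_dotProduct_mulVec_nonneg (hXs.sub hZ) fun x => ?_
  have hq := lyapunov_quad (Ac A B L R A0 B0 X - Gc B R B0 X * Xs) (Xs - Z) _
    hstable' hWquad master x
  simpa using hq
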